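/- arXiv:1802.06835 — 2 statements merged into one kernel-verified Lean document; each statement's English description precedes it below -/
import Mathlib

section
/- Assume the Bregman PDMM setup (see context) at a fixed iteration t, with iterates (x^t, y^t, ν^t) and (x^{t+1}, y^{t+1}, ν^{t+1}) satisfying the mirror-averaging optimality conditions at steps t and t+1, the primal optimality condition at step t+1, and the dual update, and with parameters satisfying 0 < γ < μσ and τ ≤ ρ(μσ − γ). Let x* ∈ 𝒳 be a consensus point (x*_i = x* for all i). Then Σ_{i=1}^m f_i(x_i^{t+1}) − Σ_{i=1}^m f_i(x*) ≤ (1/(2τ))(‖ν^t‖² − ‖ν^{t+1}‖²) + ρ Σ_{i=1}^m (B_φ(x*, y_i^t) − B_φ(x*, y_i^{t+1})) + Σ_{i=1}^m δ_i (B_{φ_i}(x*, x_i^t) − B_{φ_i}(x*, x_i^{t+1})), where ‖ν‖² = Σ_i ‖ν_i‖_2². -/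
open scoped RealInnerProductSpace BigOperators

/-- The Bregman divergence `B_φ(u,v) = φ(u) − φ(v) − ⟨∇φ(v), u − v⟩`. -/
noncomputable def breg {n : ℕ} (φ : EuclideanSpace ℝ (Fin n) → ℝ)
    (u v : EuclideanSpace ℝ (Fin n)) : ℝ :=
  φ u - φ v - ⟪gradient φ v, u - v⟫

/-- The ℓ_p norm on ℝ^n: `‖w‖_p = (Σ_k |w_k|^p)^(1/p)`. -/
noncomputable def lpnorm {n : ℕ} (p : ℝ) (w : EuclideanSpace ℝ (Fin n)) : ℝ :=
  (∑ k, |w k| ^ p) ^ (1 / p)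

section helperlemmas
variable {n : ℕ}

lemma breg_three_point (φ : EuclideanSpace ℝ (Fin n) → ℝ) (u a b : EuclideanSpace ℝ (Fin n)) :
    ⟪gradient φ a - gradient φ b, u - a⟫ = breg φ u b - breg φ u a - breg φ a b := by
  simp only [breg, inner_sub_left, inner_sub_right]
  ring

lemma tangent_le {ψ : EuclideanSpace ℝ (Fin n) → ℝ} (hd : Differentiable ℝ ψ)
    (hc : ConvexOn ℝ Set.univ ψ) (u v : EuclideanSpace ℝ (Fin n)) :
    ψ v + ⟪gradient ψ v, u - v⟫ ≤ ψ u := by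
  set g : ℝ → ℝ := fun s => ψ (v + s • (u - v)) with hg
  have hline : ∀ s : ℝ, (AffineMap.lineMap v u : ℝ →ᵃ[ℝ] _) s = v + s • (u - v) := by
    intro s
    simp [AffineMap.lineMap_apply]
    abel
  have hgc : ConvexOn ℝ Set.univ g := by
    have := hc.comp_affineMap (AffineMap.lineMap v u : ℝ →ᵃ[ℝ] _)
    have h2 : (ψ ∘ (AffineMap.lineMap v u : ℝ →ᵃ[ℝ] _)) = g := by
      funext s; simp [hline s, hg]
    rw [h2] at this
    simpa using this
  have hderiv : HasDerivAt g ⟪gradient ψ v, u - v⟫ 0 := by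
    have hc' : HasDerivAt (fun s : ℝ => v + s • (u - v)) (u - v) 0 := by
      have : HasDerivAt (fun s : ℝ => s • (u - v)) ((1:ℝ) • (u - v)) 0 :=
        (hasDerivAt_id 0).smul_const (u - v)
      simpa using this.const_add v
    have hF : HasFDerivAt ψ (InnerProductSpace.toDual ℝ _ (gradient ψ v)) (v + (0:ℝ) • (u - v)) := by
      simpa using ((hd v).hasGradientAt.hasFDerivAt)
    have := hF.comp_hasDerivAt 0 hc'
    simpa [InnerProductSpace.toDual_apply_apply, hg, Function.comp_def] using this
  have h01 : (0:ℝ) < 1 := one_pos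
  have := hgc.le_slope_of_hasDerivAt (Set.mem_univ 0) (Set.mem_univ 1) h01 hderiv
  have hs : slope g 0 1 = ψ u - ψ v := by
    simp [slope, hg]
  rw [hs] at this
  linarith

lemma breg_nonneg {ψ : EuclideanSpace ℝ (Fin n) → ℝ} (hd : Differentiable ℝ ψ)
    (hc : ConvexOn ℝ Set.univ ψ) (u v : EuclideanSpace ℝ (Fin n)) :
    0 ≤ breg ψ u v := by
  have := tangent_le hd hc u v
  unfold breg
  linarith

lemma sum_rpow_le_rpow_sum' {ι : Type*} (s : Finset ι) (b : ι → ℝ) (hb : ∀ i ∈ s, 0 ≤ b i)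
    {e : ℝ} (he : 1 ≤ e) : ∑ i ∈ s, b i ^ e ≤ (∑ i ∈ s, b i) ^ e := by
  set B := ∑ i ∈ s, b i with hB
  have hB0 : 0 ≤ B := Finset.sum_nonneg hb
  rcases eq_or_lt_of_le hB0 with h0 | hBpos
  · have hall : ∀ i ∈ s, b i = 0 :=
      (Finset.sum_eq_zero_iff_of_nonneg hb).1 h0.symm
    have he0 : e ≠ 0 := by linarith
    have : ∑ i ∈ s, b i ^ e = 0 := by
      apply Finset.sum_eq_zero
      intro i hi
      rw [hall i hi, Real.zero_rpow he0]
    rw [this, ← h0, Real.zero_rpow he0]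
  · have key : ∀ i ∈ s, b i ^ e ≤ B ^ (e - 1) * b i := by
      intro i hi
      rcases eq_or_lt_of_le (hb i hi) with h0 | hpos
      · rw [← h0, Real.zero_rpow (by linarith : e ≠ 0), mul_zero]
      · have hbB : b i ≤ B := Finset.single_le_sum hb hi
        have hsplit := Real.rpow_add hpos (e - 1) 1
        rw [sub_add_cancel, Real.rpow_one] at hsplit
        rw [hsplit]
        have := Real.rpow_le_rpow (le_of_lt hpos) hbB (by linarith : (0:ℝ) ≤ e - 1)
        exact mul_le_mul_of_nonneg_right this (le_of_lt hpos)
    calc ∑ i ∈ s, b i ^ e ≤ ∑ i ∈ s, B ^ (e - 1) * b i := Finset.sum_le_sum key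
      _ = B ^ (e - 1) * B := by rw [← Finset.mul_sum]
      _ = B ^ e := by
          have hsplit := Real.rpow_add hBpos (e - 1) 1
          rw [sub_add_cancel, Real.rpow_one] at hsplit
          rw [hsplit]

lemma sigma_norm_le {p σ : ℝ} (hp : 1 ≤ p)
    (hσ : σ = min 1 ((n : ℝ) ^ (2 / p - 1))) (w : EuclideanSpace ℝ (Fin n)) :
    σ * ‖w‖ ^ 2 ≤ lpnorm p w ^ 2 := by
  have hp0 : (0:ℝ) < p := by linarith
  have hA0 : (0:ℝ) ≤ ∑ k, |w k| ^ p :=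
    Finset.sum_nonneg fun k _ => Real.rpow_nonneg (abs_nonneg _) p
  set A := ∑ k, |w k| ^ p with hA
  have hlp : lpnorm p w ^ 2 = A ^ (2 / p) := by
    rw [lpnorm]
    rw [← Real.rpow_natCast (A ^ (1/p)) 2, ← Real.rpow_mul hA0]
    congr 1
    push_cast
    ring
  have hnormsq : ‖w‖ ^ 2 = ∑ k, |w k| ^ (2:ℕ) := by
    rw [EuclideanSpace.norm_eq, Real.sq_sqrt (Finset.sum_nonneg fun k _ => sq_nonneg _)]
    simp [Real.norm_eq_abs]
  rcases Nat.eq_zero_or_pos n with hn | hn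
  · subst hn
    have : A = 0 := by simp [hA]
    rw [hlp, this, hnormsq]
    simp [Real.zero_rpow (by positivity : 2/p ≠ 0)]
  · have hn1 : (1:ℝ) ≤ (n:ℝ) := by exact_mod_cast hn
    rcases le_or_gt p 2 with hp2 | hp2
    · have hσ1 : σ ≤ 1 := hσ ▸ min_le_left _ _
      have hσ0 : 0 ≤ σ := by
        rw [hσ]
        exact le_min one_pos.le (Real.rpow_nonneg (Nat.cast_nonneg n) _)
      have key : ‖w‖ ^ 2 ≤ A ^ (2 / p) := by
        rw [hnormsq]
        have he : (1:ℝ) ≤ 2 / p := by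
          rw [le_div_iff₀ hp0]; linarith
        have hterm : ∀ k, |w k| ^ (2:ℕ) = (|w k| ^ p) ^ (2/p) := by
          intro k
          rw [← Real.rpow_natCast |w k| 2, ← Real.rpow_mul (abs_nonneg _)]
          congr 1
          field_simp
          norm_num
        calc (∑ k, |w k| ^ (2:ℕ)) = ∑ k, (|w k| ^ p) ^ (2/p) := by
              exact Finset.sum_congr rfl fun k _ => hterm k
          _ ≤ A ^ (2/p) := sum_rpow_le_rpow_sum' _ _
              (fun k _ => Real.rpow_nonneg (abs_nonneg _) p) he
      calc σ * ‖w‖ ^ 2 ≤ 1 * ‖w‖ ^ 2 :=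
            mul_le_mul_of_nonneg_right hσ1 (sq_nonneg _)
        _ = ‖w‖ ^ 2 := one_mul _
        _ ≤ A ^ (2/p) := key
        _ = lpnorm p w ^ 2 := hlp.symm
    · have hnpos : (0:ℝ) < (n:ℝ) := by exact_mod_cast hn
      have hσeq : σ = (n:ℝ) ^ (2/p - 1) := by
        rw [hσ, min_eq_right]
        exact Real.rpow_le_one_of_one_le_of_nonpos hn1
          (by rw [sub_nonpos, div_le_one hp0]; linarith)
      have he : (1:ℝ) ≤ p / 2 := by linarith
      set a : Fin n → ℝ := fun k => |w k| ^ (2:ℕ) with ha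
      have ha0 : ∀ k ∈ Finset.univ, (0:ℝ) ≤ a k := fun k _ => sq_nonneg _
      set Sa := ∑ k, a k with hSa
      have hmean := Real.rpow_arith_mean_le_arith_mean_rpow Finset.univ
        (fun _ => 1 / (n:ℝ)) a (fun i _ => by positivity)
        (by simp [Finset.card_univ]; field_simp) ha0 he
      have hae : ∀ k, a k ^ (p/2) = |w k| ^ p := by
        intro k
        rw [ha]
        rw [← Real.rpow_natCast_mul (abs_nonneg _) 2 (p/2)]
        congr 1
        push_cast
        ring
      have h1 : ((1/(n:ℝ)) * Sa) ^ (p/2) ≤ (1/(n:ℝ)) * A := by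
        calc ((1/(n:ℝ)) * Sa) ^ (p/2) = (∑ i, 1/(n:ℝ) * a i) ^ (p/2) := by
              rw [← Finset.mul_sum]
          _ ≤ ∑ i, 1/(n:ℝ) * a i ^ (p/2) := hmean
          _ = (1/(n:ℝ)) * A := by
              rw [← Finset.mul_sum]
              congr 1
              exact Finset.sum_congr rfl fun k _ => hae k
      have hX0 : 0 ≤ (1/(n:ℝ)) * Sa := by positivity
      have h2 : (1/(n:ℝ)) * Sa ≤ ((1/(n:ℝ)) * A) ^ (2/p) := by
        have := Real.rpow_le_rpow (Real.rpow_nonneg hX0 _) h1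
          (by positivity : (0:ℝ) ≤ 2/p)
        rwa [← Real.rpow_mul hX0, div_mul_div_comm, mul_comm p 2,
          div_self (by positivity : (2*p : ℝ) ≠ 0), Real.rpow_one] at this
      have h3 : (n:ℝ) ^ (2/p) * ((1/(n:ℝ)) * Sa) ≤
          (n:ℝ) ^ (2/p) * ((1/(n:ℝ)) * A) ^ (2/p) :=
        mul_le_mul_of_nonneg_left h2 (Real.rpow_nonneg hnpos.le _)
      have hL : (n:ℝ) ^ (2/p) * ((1/(n:ℝ)) * Sa) = σ * Sa := by
        rw [hσeq, Real.rpow_sub hnpos, Real.rpow_one]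
        field_simp
      have hR : (n:ℝ) ^ (2/p) * ((1/(n:ℝ)) * A) ^ (2/p) = A ^ (2/p) := by
        rw [← Real.mul_rpow hnpos.le (by positivity)]
        congr 1
        field_simp
      rw [hL, hR] at h3
      rw [hlp, hnormsq]
      exact h3

end helperlemmas

section matrixpart
variable {m : ℕ} {P : Matrix (Fin m) (Fin m) ℝ}

lemma col_sum (hPsym : ∀ i j, P i j = P j i) (hProw : ∀ i, ∑ j, P i j = 1) (j : Fin m) :
    ∑ i, P i j = 1 := by
  rw [Finset.sum_congr rfl fun i _ => hPsym i j]
  exact hProw j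

lemma quad_le_sq (hPnn : ∀ i j, 0 ≤ P i j) (hProw : ∀ i, ∑ j, P i j = 1)
    (hPsym : ∀ i j, P i j = P j i) (u : Fin m → ℝ) :
    ∑ i, ∑ j, P i j * u i * u j ≤ ∑ i, u i ^ 2 := by
  have step1 : ∑ i, ∑ j, P i j * u i * u j
      ≤ ∑ i, ∑ j, P i j * ((u i ^ 2 + u j ^ 2) / 2) := by
    apply Finset.sum_le_sum; intro i _
    apply Finset.sum_le_sum; intro j _
    nlinarith [sq_nonneg (u i - u j), hPnn i j]
  have step2 : ∑ i, ∑ j, P i j * ((u i ^ 2 + u j ^ 2) / 2) = ∑ i, u i ^ 2 := by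
    have expand : ∀ i, ∑ j, P i j * ((u i ^ 2 + u j ^ 2) / 2)
        = (1/2) * u i ^ 2 + (1/2) * ∑ j, P i j * u j ^ 2 := by
      intro i
      have h : ∀ j, P i j * ((u i ^ 2 + u j ^ 2) / 2)
          = (u i ^ 2 / 2) * P i j + (1/2) * (P i j * u j ^ 2) := by intro j; ring
      rw [Finset.sum_congr rfl fun j _ => h j, Finset.sum_add_distrib,
        ← Finset.mul_sum, ← Finset.mul_sum, hProw i]
      ring
    rw [Finset.sum_congr rfl fun i _ => expand i, Finset.sum_add_distrib,
      ← Finset.mul_sum, ← Finset.mul_sum, Finset.sum_comm]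
    have h2 : ∑ j, ∑ i, P i j * u j ^ 2 = ∑ j, u j ^ 2 := by
      apply Finset.sum_congr rfl; intro j _
      rw [← Finset.sum_mul, col_sum hPsym hProw j, one_mul]
    rw [h2]
    ring
  exact le_trans step1 (le_of_eq step2)

lemma Pv_sq_le (hPnn : ∀ i j, 0 ≤ P i j) (hProw : ∀ i, ∑ j, P i j = 1)
    (hPsym : ∀ i j, P i j = P j i)
    (psd : ∀ u : Fin m → ℝ, 0 ≤ ∑ i, ∑ j, P i j * u i * u j) (v : Fin m → ℝ) :
    ∑ i, (∑ j, P i j * v j) ^ 2 ≤ ∑ i, ∑ j, P i j * v i * v j := by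
  set c : Fin m → ℝ := fun i => ∑ j, P i j * v j with hc
  set t := ∑ i, c i ^ 2 with ht
  set Qv := ∑ i, ∑ j, P i j * v i * v j with hQv
  set Qc := ∑ i, ∑ j, P i j * c i * c j with hQc
  have ht0 : 0 ≤ t := Finset.sum_nonneg fun i _ => sq_nonneg _
  have hQv0 : 0 ≤ Qv := psd v
  have hcv : ∑ i, ∑ j, P i j * c i * v j = t := by
    rw [ht]
    apply Finset.sum_congr rfl
    intro i _
    have h : ∑ j, P i j * c i * v j = c i * ∑ j, P i j * v j := by
      rw [Finset.mul_sum]; apply Finset.sum_congr rfl; intro j _; ring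
    rw [h, show (∑ j, P i j * v j) = c i from rfl]
    ring
  have hvc : ∑ i, ∑ j, P i j * v i * c j = t := by
    rw [Finset.sum_comm, ht]
    apply Finset.sum_congr rfl
    intro j _
    have h : ∑ i, P i j * v i * c j = c j * ∑ i, P j i * v i := by
      rw [Finset.mul_sum]; apply Finset.sum_congr rfl; intro i _
      rw [hPsym i j]; ring
    rw [h, show (∑ i, P j i * v i) = c j from rfl]
    ring
  have hquad : ∀ s : ℝ, 0 ≤ Qc * (s * s) + (2 * t) * s + Qv := by
    intro s
    have h := psd fun i => v i + s * c i
    have hexp : ∑ i, ∑ j, P i j * (v i + s * c i) * (v j + s * c j)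
        = Qc * (s * s) + (2 * t) * s + Qv := by
      have h1 : ∀ i j, P i j * (v i + s * c i) * (v j + s * c j)
          = (P i j * c i * c j) * (s * s) + (P i j * v i * c j) * s
            + (P i j * c i * v j) * s + P i j * v i * v j := by
        intro i j; ring
      rw [Finset.sum_congr rfl fun i _ => Finset.sum_congr rfl fun j _ => h1 i j]
      simp only [Finset.sum_add_distrib, ← Finset.sum_mul]
      rw [hcv, hvc, ← hQc, ← hQv]
      ring
    rw [hexp] at h
    exact h
  have hdisc := discrim_le_zero hquad
  rw [discrim] at hdisc
  have ht2 : t ^ 2 ≤ Qc * Qv := by nlinarith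
  have hQct : Qc ≤ t := quad_le_sq hPnn hProw hPsym c
  rcases eq_or_lt_of_le ht0 with h0 | hpos
  · rw [← h0]; exact hQv0
  · have h1 : t * t ≤ t * Qv := by nlinarith
    exact le_of_mul_le_mul_left h1 hpos

lemma key_matrix (hPnn : ∀ i j, 0 ≤ P i j) (hProw : ∀ i, ∑ j, P i j = 1)
    (hPsym : ∀ i j, P i j = P j i)
    (psd : ∀ u : Fin m → ℝ, 0 ≤ ∑ i, ∑ j, P i j * u i * u j) (v w : Fin m → ℝ) :
    ∑ i, (v i - ∑ j, P i j * v j) ^ 2 ≤ ∑ i, ∑ j, P i j * (w i - v j) ^ 2 := by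
  set c : Fin m → ℝ := fun i => ∑ j, P i j * v j with hc
  set t := ∑ i, c i ^ 2 with ht
  set Qv := ∑ i, ∑ j, P i j * v i * v j with hQv
  have hcenter : ∀ i, ∑ j, P i j * (c i - v j) = 0 := by
    intro i
    have h : ∑ j, P i j * (c i - v j) = (∑ j, P i j) * c i - ∑ j, P i j * v j := by
      rw [Finset.sum_mul, ← Finset.sum_sub_distrib]
      apply Finset.sum_congr rfl; intro j _; ring
    rw [h, hProw i, one_mul, show (∑ j, P i j * v j) = c i from rfl, sub_self]
  have e1 : ∀ i, ∑ j, P i j * (w i - v j) ^ 2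
      = (w i - c i) ^ 2 + ∑ j, P i j * (c i - v j) ^ 2 := by
    intro i
    have expand : ∀ j, P i j * (w i - v j) ^ 2
        = P i j * (w i - c i) ^ 2 + (2 * (w i - c i)) * (P i j * (c i - v j))
          + P i j * (c i - v j) ^ 2 := by
      intro j; ring
    rw [Finset.sum_congr rfl fun j _ => expand j]
    rw [Finset.sum_add_distrib, Finset.sum_add_distrib, ← Finset.mul_sum,
      hcenter i, mul_zero, add_zero, ← Finset.sum_mul, hProw i, one_mul]
  have e2 : ∑ i, ∑ j, P i j * (c i - v j) ^ 2 = (∑ j, v j ^ 2) - t := by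
    have inner : ∀ i, ∑ j, P i j * (c i - v j) ^ 2
        = (∑ j, P i j * v j ^ 2) - c i ^ 2 := by
      intro i
      have expand : ∀ j, P i j * (c i - v j) ^ 2
          = P i j * c i ^ 2 - (2 * c i) * (P i j * v j) + P i j * v j ^ 2 := by
        intro j; ring
      rw [Finset.sum_congr rfl fun j _ => expand j]
      rw [Finset.sum_add_distrib, Finset.sum_sub_distrib, ← Finset.sum_mul, hProw i,
        ← Finset.mul_sum, show (∑ j, P i j * v j) = c i from rfl]
      ring
    rw [Finset.sum_congr rfl fun i _ => inner i, Finset.sum_sub_distrib, Finset.sum_comm, ht]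
    have h2 : ∑ j, ∑ i, P i j * v j ^ 2 = ∑ j, v j ^ 2 := by
      apply Finset.sum_congr rfl; intro j _
      rw [← Finset.sum_mul, col_sum hPsym hProw j, one_mul]
    rw [h2]
  have e3 : ∑ i, (v i - c i) ^ 2 = (∑ i, v i ^ 2) - 2 * Qv + t := by
    have expand : ∀ i, (v i - c i) ^ 2 = v i ^ 2 - 2 * (v i * c i) + c i ^ 2 := by
      intro i; ring
    rw [Finset.sum_congr rfl fun i _ => expand i, Finset.sum_add_distrib,
      Finset.sum_sub_distrib, ← Finset.mul_sum]
    have h3 : ∑ i, v i * c i = Qv := by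
      rw [hQv]
      apply Finset.sum_congr rfl; intro i _
      rw [show c i = ∑ j, P i j * v j from rfl, Finset.mul_sum]
      apply Finset.sum_congr rfl; intro j _; ring
    rw [h3, ht]
  have hkey : t ≤ Qv := Pv_sq_le hPnn hProw hPsym psd v
  have hw : 0 ≤ ∑ i, (w i - c i) ^ 2 := Finset.sum_nonneg fun i _ => sq_nonneg _
  calc ∑ i, (v i - ∑ j, P i j * v j) ^ 2 = ∑ i, (v i - c i) ^ 2 := rfl
    _ = (∑ i, v i ^ 2) - 2 * Qv + t := e3
    _ ≤ (∑ i, v i ^ 2) - t := by linarith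
    _ = ∑ i, ∑ j, P i j * (c i - v j) ^ 2 := by rw [e2]
    _ ≤ ∑ i, ((w i - c i) ^ 2 + ∑ j, P i j * (c i - v j) ^ 2) := by
        apply Finset.sum_le_sum; intro i _
        nlinarith [sq_nonneg (w i - c i)]
    _ = ∑ i, ∑ j, P i j * (w i - v j) ^ 2 := by
        apply Finset.sum_congr rfl; intro i _
        rw [e1 i]

lemma psd_sum (hPpsd : P.PosSemidef)
    (u : Fin m → ℝ) : 0 ≤ ∑ i, ∑ j, P i j * u i * u j := by
  have h := hPpsd.dotProduct_mulVec_nonneg u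
  rw [dotProduct] at h
  convert h using 1
  · rfl
  apply Finset.sum_congr rfl; intro i _
  rw [Matrix.mulVec, dotProduct, star_trivial, Finset.mul_sum]
  apply Finset.sum_congr rfl; intro j _
  ring

lemma norm_sq_coord {n : ℕ} (z : EuclideanSpace ℝ (Fin n)) : ‖z‖ ^ 2 = ∑ k, (z k) ^ 2 := by
  rw [EuclideanSpace.norm_eq, Real.sq_sqrt (Finset.sum_nonneg fun k _ => sq_nonneg _)]
  exact Finset.sum_congr rfl fun k _ => by rw [Real.norm_eq_abs, sq_abs]

lemma euclid_sum_apply {n : ℕ} (c : Fin m → ℝ) (a : Fin m → EuclideanSpace ℝ (Fin n))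
    (k : Fin n) : (∑ j, c j • a j) k = ∑ j, c j * a j k :=
  calc (∑ j, c j • a j) k = (EuclideanSpace.proj k : EuclideanSpace ℝ (Fin n) →L[ℝ] ℝ)
        (∑ j, c j • a j) := rfl
    _ = ∑ j, (EuclideanSpace.proj k : EuclideanSpace ℝ (Fin n) →L[ℝ] ℝ) (c j • a j) :=
        map_sum _ _ _
    _ = ∑ j, c j * a j k := Finset.sum_congr rfl fun j _ => by
        rw [map_smul]; rfl

lemma key_matrix_vec {n : ℕ}
    (hPnn : ∀ i j, 0 ≤ P i j) (hProw : ∀ i, ∑ j, P i j = 1)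
    (hPsym : ∀ i j, P i j = P j i)
    (psd : ∀ u : Fin m → ℝ, 0 ≤ ∑ i, ∑ j, P i j * u i * u j)
    (a w : Fin m → EuclideanSpace ℝ (Fin n)) :
    ∑ i, ‖a i - ∑ j, P i j • a j‖ ^ 2 ≤ ∑ i, ∑ j, P i j * ‖w i - a j‖ ^ 2 := by
  have lhs_eq : ∑ i, ‖a i - ∑ j, P i j • a j‖ ^ 2
      = ∑ k, ∑ i, (a i k - ∑ j, P i j * a j k) ^ 2 := by
    rw [Finset.sum_comm]
    apply Finset.sum_congr rfl; intro i _
    rw [norm_sq_coord]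
    apply Finset.sum_congr rfl; intro k _
    rw [PiLp.sub_apply, euclid_sum_apply]
  have rhs_eq : ∑ i, ∑ j, P i j * ‖w i - a j‖ ^ 2
      = ∑ k, ∑ i, ∑ j, P i j * (w i k - a j k) ^ 2 := by
    have h1 : ∀ i j, P i j * ‖w i - a j‖ ^ 2 = ∑ k, P i j * (w i k - a j k) ^ 2 := by
      intro i j
      rw [norm_sq_coord, Finset.mul_sum]
      exact Finset.sum_congr rfl fun k _ => by rw [PiLp.sub_apply]
    rw [Finset.sum_congr rfl fun i _ => Finset.sum_congr rfl fun j _ => h1 i j]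
    rw [Finset.sum_congr rfl fun i (_ : i ∈ Finset.univ) =>
      (Finset.sum_comm : ∑ j : Fin m, ∑ k, P i j * (w i k - a j k)^2
        = ∑ k, ∑ j : Fin m, P i j * (w i k - a j k)^2)]
    exact Finset.sum_comm
  rw [lhs_eq, rhs_eq]
  apply Finset.sum_le_sum
  intro k _
  exact key_matrix hPnn hProw hPsym psd (fun j => a j k) (fun i => w i k)

end matrixpart

/-- One-step objective descent inequality for Bregman PDMM. -/
theorem bregman_pdmm_one_step_objective_bound {n m : ℕ}
    (𝒳 : Set (EuclideanSpace ℝ (Fin n)))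
    (hXne : 𝒳.Nonempty) (hXclosed : IsClosed 𝒳) (hXconv : Convex ℝ 𝒳)
    (f : Fin m → EuclideanSpace ℝ (Fin n) → ℝ)
    (hf : ∀ i, ConvexOn ℝ Set.univ (f i))
    (P : Matrix (Fin m) (Fin m) ℝ) (hPsym : P.IsSymm)
    (hPnn : ∀ i j, 0 ≤ P i j) (hProw : ∀ i, ∑ j, P i j = 1) (hPpsd : P.PosSemidef)
    (φ : EuclideanSpace ℝ (Fin n) → ℝ)
    (hφd : Differentiable ℝ φ) (hφc : ConvexOn ℝ Set.univ φ)
    (φi : Fin m → EuclideanSpace ℝ (Fin n) → ℝ)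
    (hφid : ∀ i, Differentiable ℝ (φi i)) (hφic : ∀ i, ConvexOn ℝ Set.univ (φi i))
    (μ p σ ρ τ γ : ℝ) (δ : Fin m → ℝ)
    (hμ : 0 < μ) (hp : 1 ≤ p)
    (hstrong : ∀ u ∈ 𝒳, ∀ v ∈ 𝒳, μ / 2 * lpnorm p (u - v) ^ 2 ≤ breg φ u v)
    (hσ : σ = min 1 ((n : ℝ) ^ (2 / p - 1)))
    (hρ : 0 < ρ) (hτ : 0 < τ) (hδ : ∀ i, 0 ≤ δ i)
    (hγ0 : 0 < γ) (hγ : γ < μ * σ) (hτρ : τ ≤ ρ * (μ * σ - γ))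
    (x y ν : ℕ → Fin m → EuclideanSpace ℝ (Fin n))
    (hxX : ∀ t i, x t i ∈ 𝒳) (hyX : ∀ t i, y t i ∈ 𝒳)
    (t : ℕ)
    (hmirror : ∀ s ∈ ({t, t + 1} : Set ℕ), ∀ i, ∀ u ∈ 𝒳,
      0 ≤ ∑ j, P i j * ⟪gradient φ (y s i) - gradient φ (x s j), u - y s i⟫)
    (hprimal : ∀ i, ∃ g : EuclideanSpace ℝ (Fin n),
      (∀ v ∈ 𝒳, 0 ≤ ⟪g, x (t + 1) i - v⟫) ∧
      ∀ v, f i v ≥ f i (x (t + 1) i) +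
        ⟪-ν t i + (∑ j, P i j • ν t j)
            - ρ • (gradient φ (x (t + 1) i) - gradient φ (y t i))
            - δ i • (gradient (φi i) (x (t + 1) i) - gradient (φi i) (x t i))
            - g, v - x (t + 1) i⟫)
    (hdual : ∀ i, ν (t + 1) i =
      ν t i + τ • (x (t + 1) i - ∑ j, P i j • x (t + 1) j))
    (xstar : EuclideanSpace ℝ (Fin n)) (hxstar : xstar ∈ 𝒳) :
    (∑ i, f i (x (t + 1) i)) - ∑ i, f i xstar ≤
      1 / (2 * τ) * ((∑ i, ‖ν t i‖ ^ 2) - ∑ i, ‖ν (t + 1) i‖ ^ 2)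
        + ρ * ∑ i, (breg φ xstar (y t i) - breg φ xstar (y (t + 1) i))
        + ∑ i, δ i * (breg (φi i) xstar (x t i) - breg (φi i) xstar (x (t + 1) i)) := by
  classical
  have hPsym' : ∀ i j, P i j = P j i := fun i j => hPsym.apply j i
  have hcol : ∀ j, ∑ i, P i j = 1 := col_sum hPsym' hProw
  have psd' := psd_sum hPpsd
  have hτ' : τ ≠ 0 := ne_of_gt hτ
  -- Step A: per-agent primal bound
  have hA : ∀ i, f i (x (t + 1) i) - f i xstar ≤
      ⟪(∑ j, P i j • ν t j) - ν t i, x (t + 1) i - xstar⟫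
      + ρ * (breg φ xstar (y t i) - breg φ xstar (x (t + 1) i))
      + δ i * (breg (φi i) xstar (x t i) - breg (φi i) xstar (x (t + 1) i)) := by
    intro i
    obtain ⟨g, hg, hineq⟩ := hprimal i
    have h1 := hineq xstar
    have hgp := hg xstar hxstar
    have h3 := breg_three_point φ xstar (x (t + 1) i) (y t i)
    have h3i := breg_three_point (φi i) xstar (x (t + 1) i) (x t i)
    have hbnn : 0 ≤ breg φ (x (t + 1) i) (y t i) :=
      le_trans (mul_nonneg (by linarith) (sq_nonneg _))
        (hstrong _ (hxX (t + 1) i) _ (hyX t i))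
    have hbnni : 0 ≤ breg (φi i) (x (t + 1) i) (x t i) := breg_nonneg (hφid i) (hφic i) _ _
    have hE : ⟪-ν t i + (∑ j, P i j • ν t j)
          - ρ • (gradient φ (x (t + 1) i) - gradient φ (y t i))
          - δ i • (gradient (φi i) (x (t + 1) i) - gradient (φi i) (x t i))
          - g, xstar - x (t + 1) i⟫
        = -⟪(∑ j, P i j • ν t j) - ν t i, x (t + 1) i - xstar⟫
          - ρ * ⟪gradient φ (x (t + 1) i) - gradient φ (y t i), xstar - x (t + 1) i⟫
          - δ i * ⟪gradient (φi i) (x (t + 1) i) - gradient (φi i) (x t i),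
              xstar - x (t + 1) i⟫
          - ⟪g, xstar - x (t + 1) i⟫ := by
      simp only [inner_sub_left, inner_add_left, inner_neg_left, real_inner_smul_left,
        inner_sub_right]
      ring
    rw [h3, h3i] at hE
    rw [hE] at h1
    have hneg : ⟪g, xstar - x (t + 1) i⟫ = -⟪g, x (t + 1) i - xstar⟫ := by
      rw [← inner_neg_right, neg_sub]
    have hρB : ρ * (breg φ xstar (y t i) - breg φ xstar (x (t + 1) i)
          - breg φ (x (t + 1) i) (y t i))
        = ρ * (breg φ xstar (y t i) - breg φ xstar (x (t + 1) i))
          - ρ * breg φ (x (t + 1) i) (y t i) := by ring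
    have hδB : δ i * (breg (φi i) xstar (x t i) - breg (φi i) xstar (x (t + 1) i)
          - breg (φi i) (x (t + 1) i) (x t i))
        = δ i * (breg (φi i) xstar (x t i) - breg (φi i) xstar (x (t + 1) i))
          - δ i * breg (φi i) (x (t + 1) i) (x t i) := by ring
    have h5 : 0 ≤ ρ * breg φ (x (t + 1) i) (y t i) := mul_nonneg hρ.le hbnn
    have h6 : 0 ≤ δ i * breg (φi i) (x (t + 1) i) (x t i) := mul_nonneg (hδ i) hbnni
    linarith [h1, hgp, h5, h6, hρB, hδB, hneg]
  -- Step B: dual identity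
  have hB1 : ∑ i, ⟪(∑ j, P i j • ν t j) - ν t i, xstar⟫ = 0 := by
    have hsum1 : ∀ i, ⟪(∑ j, P i j • ν t j) - ν t i, xstar⟫
        = (∑ j, P i j * ⟪ν t j, xstar⟫) - ⟪ν t i, xstar⟫ := by
      intro i
      rw [inner_sub_left, sum_inner]
      congr 1
      exact Finset.sum_congr rfl fun j _ => real_inner_smul_left _ _ _
    rw [Finset.sum_congr rfl fun i _ => hsum1 i, Finset.sum_sub_distrib, Finset.sum_comm]
    have h : ∀ j, ∑ i, P i j * ⟪ν t j, xstar⟫ = ⟪ν t j, xstar⟫ := fun j => by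
      rw [← Finset.sum_mul, hcol j, one_mul]
    rw [Finset.sum_congr rfl fun j _ => h j, sub_self]
  have hB2 : ∑ i, ⟪(∑ j, P i j • ν t j) - ν t i, x (t + 1) i⟫
      = ∑ i, ⟪ν t i, (∑ j, P i j • x (t + 1) j) - x (t + 1) i⟫ := by
    have hL : ∀ i, ⟪(∑ j, P i j • ν t j) - ν t i, x (t + 1) i⟫
        = (∑ j, P i j * ⟪ν t j, x (t + 1) i⟫) - ⟪ν t i, x (t + 1) i⟫ := by
      intro i
      rw [inner_sub_left, sum_inner]
      congr 1
      exact Finset.sum_congr rfl fun j _ => real_inner_smul_left _ _ _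
    have hR : ∀ i, ⟪ν t i, (∑ j, P i j • x (t + 1) j) - x (t + 1) i⟫
        = (∑ j, P i j * ⟪ν t i, x (t + 1) j⟫) - ⟪ν t i, x (t + 1) i⟫ := by
      intro i
      rw [inner_sub_right, inner_sum]
      congr 1
      exact Finset.sum_congr rfl fun j _ => real_inner_smul_right _ _ _
    rw [Finset.sum_congr rfl fun i _ => hL i, Finset.sum_congr rfl fun i _ => hR i,
      Finset.sum_sub_distrib, Finset.sum_sub_distrib]
    congr 1
    rw [Finset.sum_comm]
    apply Finset.sum_congr rfl; intro i _
    apply Finset.sum_congr rfl; intro j _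
    rw [hPsym' j i]
  have hB3 : ∀ i, ⟪ν t i, (∑ j, P i j • x (t + 1) j) - x (t + 1) i⟫
      = 1 / (2 * τ) * (‖ν t i‖ ^ 2 - ‖ν (t + 1) i‖ ^ 2)
        + τ / 2 * ‖x (t + 1) i - ∑ j, P i j • x (t + 1) j‖ ^ 2 := by
    intro i
    have hd := hdual i
    set r := x (t + 1) i - ∑ j, P i j • x (t + 1) j with hrdef
    have hsub : (∑ j, P i j • x (t + 1) j) - x (t + 1) i = -r := by
      rw [hrdef]; abel
    have hnrm : ‖ν (t + 1) i‖ ^ 2 = ‖ν t i‖ ^ 2 + 2 * (τ * ⟪ν t i, r⟫) + τ ^ 2 * ‖r‖ ^ 2 := by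
      rw [hd, norm_add_sq_real, real_inner_smul_right, norm_smul, Real.norm_eq_abs,
        mul_pow, sq_abs]
    rw [hsub, inner_neg_right, hnrm]
    field_simp
    ring
  have hB : ∑ i, ⟪(∑ j, P i j • ν t j) - ν t i, x (t + 1) i - xstar⟫
      = 1 / (2 * τ) * ((∑ i, ‖ν t i‖ ^ 2) - ∑ i, ‖ν (t + 1) i‖ ^ 2)
        + τ / 2 * ∑ i, ‖x (t + 1) i - ∑ j, P i j • x (t + 1) j‖ ^ 2 := by
    have hsplit : ∀ i, ⟪(∑ j, P i j • ν t j) - ν t i, x (t + 1) i - xstar⟫ =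
        ⟪(∑ j, P i j • ν t j) - ν t i, x (t + 1) i⟫
          - ⟪(∑ j, P i j • ν t j) - ν t i, xstar⟫ := fun i => inner_sub_right _ _ _
    rw [Finset.sum_congr rfl fun i _ => hsplit i, Finset.sum_sub_distrib, hB1, sub_zero,
      hB2, Finset.sum_congr rfl fun i _ => hB3 i, Finset.sum_add_distrib,
      ← Finset.mul_sum, ← Finset.mul_sum, Finset.sum_sub_distrib]
  -- Step C: mirror averaging at step t+1
  have hC : (∑ i, breg φ xstar (y (t + 1) i))
      + ∑ i, ∑ j, P i j * breg φ (y (t + 1) i) (x (t + 1) j)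
      ≤ ∑ i, breg φ xstar (x (t + 1) i) := by
    have hper : ∀ i, breg φ xstar (y (t + 1) i)
        + ∑ j, P i j * breg φ (y (t + 1) i) (x (t + 1) j)
        ≤ ∑ j, P i j * breg φ xstar (x (t + 1) j) := by
      intro i
      have hm := hmirror (t + 1) (by simp) i xstar hxstar
      have h3 : ∀ j, P i j * ⟪gradient φ (y (t + 1) i) - gradient φ (x (t + 1) j),
            xstar - y (t + 1) i⟫
          = P i j * (breg φ xstar (x (t + 1) j) - breg φ xstar (y (t + 1) i)
            - breg φ (y (t + 1) i) (x (t + 1) j)) := fun j => by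
        rw [breg_three_point φ xstar (y (t + 1) i) (x (t + 1) j)]
      rw [Finset.sum_congr rfl fun j _ => h3 j] at hm
      have hexp : ∑ j, P i j * (breg φ xstar (x (t + 1) j) - breg φ xstar (y (t + 1) i)
            - breg φ (y (t + 1) i) (x (t + 1) j))
          = (∑ j, P i j * breg φ xstar (x (t + 1) j)) - breg φ xstar (y (t + 1) i)
            - ∑ j, P i j * breg φ (y (t + 1) i) (x (t + 1) j) := by
        have h4 : ∀ j, P i j * (breg φ xstar (x (t + 1) j) - breg φ xstar (y (t + 1) i)
              - breg φ (y (t + 1) i) (x (t + 1) j))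
            = P i j * breg φ xstar (x (t + 1) j)
              - P i j * breg φ xstar (y (t + 1) i)
              - P i j * breg φ (y (t + 1) i) (x (t + 1) j) := fun j => by ring
        rw [Finset.sum_congr rfl fun j _ => h4 j, Finset.sum_sub_distrib,
          Finset.sum_sub_distrib, ← Finset.sum_mul, hProw i, one_mul]
      rw [hexp] at hm
      linarith
    calc (∑ i, breg φ xstar (y (t + 1) i))
        + ∑ i, ∑ j, P i j * breg φ (y (t + 1) i) (x (t + 1) j)
        = ∑ i, (breg φ xstar (y (t + 1) i)
            + ∑ j, P i j * breg φ (y (t + 1) i) (x (t + 1) j)) :=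
          Finset.sum_add_distrib.symm
      _ ≤ ∑ i, ∑ j, P i j * breg φ xstar (x (t + 1) j) :=
          Finset.sum_le_sum fun i _ => hper i
      _ = ∑ j, breg φ xstar (x (t + 1) j) := by
          rw [Finset.sum_comm]
          apply Finset.sum_congr rfl; intro j _
          rw [← Finset.sum_mul, hcol j, one_mul]
  -- Step D: residual bound
  have hμσ : 0 < μ * σ := lt_trans hγ0 hγ
  have hD : τ / 2 * ∑ i, ‖x (t + 1) i - ∑ j, P i j • x (t + 1) j‖ ^ 2
      ≤ ρ * ∑ i, ∑ j, P i j * breg φ (y (t + 1) i) (x (t + 1) j) := by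
    have hband : ∀ i j, μ * σ / 2 * ‖y (t + 1) i - x (t + 1) j‖ ^ 2
        ≤ breg φ (y (t + 1) i) (x (t + 1) j) := by
      intro i j
      have h1 := hstrong (y (t + 1) i) (hyX (t + 1) i) (x (t + 1) j) (hxX (t + 1) j)
      have h2 := sigma_norm_le hp hσ (y (t + 1) i - x (t + 1) j)
      calc μ * σ / 2 * ‖y (t + 1) i - x (t + 1) j‖ ^ 2
          = μ / 2 * (σ * ‖y (t + 1) i - x (t + 1) j‖ ^ 2) := by ring
        _ ≤ μ / 2 * lpnorm p (y (t + 1) i - x (t + 1) j) ^ 2 :=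
            mul_le_mul_of_nonneg_left h2 (by linarith)
        _ ≤ breg φ (y (t + 1) i) (x (t + 1) j) := h1
    have hKM := key_matrix_vec hPnn hProw hPsym' psd' (x (t + 1)) (y (t + 1))
    have hRnn : 0 ≤ ∑ i, ‖x (t + 1) i - ∑ j, P i j • x (t + 1) j‖ ^ 2 :=
      Finset.sum_nonneg fun i _ => sq_nonneg _
    have hτμ : τ / 2 ≤ ρ * (μ * σ) / 2 := by nlinarith
    have hc0 : (0:ℝ) ≤ ρ * (μ * σ) / 2 :=
      div_nonneg (mul_nonneg hρ.le hμσ.le) (by norm_num)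
    calc τ / 2 * ∑ i, ‖x (t + 1) i - ∑ j, P i j • x (t + 1) j‖ ^ 2
        ≤ ρ * (μ * σ) / 2 * ∑ i, ‖x (t + 1) i - ∑ j, P i j • x (t + 1) j‖ ^ 2 :=
          mul_le_mul_of_nonneg_right hτμ hRnn
      _ ≤ ρ * (μ * σ) / 2 * ∑ i, ∑ j, P i j * ‖y (t + 1) i - x (t + 1) j‖ ^ 2 :=
          mul_le_mul_of_nonneg_left hKM hc0
      _ = ρ * ∑ i, ∑ j, P i j * (μ * σ / 2 * ‖y (t + 1) i - x (t + 1) j‖ ^ 2) := by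
          rw [Finset.mul_sum, Finset.mul_sum]
          apply Finset.sum_congr rfl; intro i _
          rw [Finset.mul_sum, Finset.mul_sum]
          apply Finset.sum_congr rfl; intro j _
          ring
      _ ≤ ρ * ∑ i, ∑ j, P i j * breg φ (y (t + 1) i) (x (t + 1) j) := by
          apply mul_le_mul_of_nonneg_left _ hρ.le
          apply Finset.sum_le_sum; intro i _
          apply Finset.sum_le_sum; intro j _
          exact mul_le_mul_of_nonneg_left (hband i j) (hPnn i j)
  -- Combine
  have hAsum : (∑ i, f i (x (t + 1) i)) - (∑ i, f i xstar)
      ≤ (∑ i, ⟪(∑ j, P i j • ν t j) - ν t i, x (t + 1) i - xstar⟫)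
        + ρ * (∑ i, (breg φ xstar (y t i) - breg φ xstar (x (t + 1) i)))
        + ∑ i, δ i * (breg (φi i) xstar (x t i) - breg (φi i) xstar (x (t + 1) i)) := by
    rw [← Finset.sum_sub_distrib, Finset.mul_sum, ← Finset.sum_add_distrib,
      ← Finset.sum_add_distrib]
    exact Finset.sum_le_sum fun i _ => hA i
  have hCm := mul_le_mul_of_nonneg_left hC hρ.le
  rw [mul_add] at hCm
  have hgoal_rw : ρ * ∑ i, (breg φ xstar (y t i) - breg φ xstar (y (t + 1) i))
      = ρ * (∑ i, breg φ xstar (y t i)) - ρ * (∑ i, breg φ xstar (y (t + 1) i)) := by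
    rw [Finset.sum_sub_distrib, mul_sub]
  have hA_rw : ρ * (∑ i, (breg φ xstar (y t i) - breg φ xstar (x (t + 1) i)))
      = ρ * (∑ i, breg φ xstar (y t i)) - ρ * (∑ i, breg φ xstar (x (t + 1) i)) := by
    rw [Finset.sum_sub_distrib, mul_sub]
  linarith [hAsum, hB, hD, hCm, hgoal_rw, hA_rw]
end

section
/- Assume the Bregman PDMM setup (see context) with the mirror-averaging optimality conditions, primal optimality conditions and dual updates holding at every iteration t ∈ ℕ, parameters satisfying 0 < γ < μσ and τ ≤ ρ(μσ − γ), and a KKT point (x*, ν*) as in the context. With V(s) = (1/(2τρ)) Σ_i ‖ν*_i − ν_i^s‖_2² + Σ_i B_φ(x*, y_i^s) + Σ_i (δ_i/ρ) B_{φ_i}(x*, x_i^s) and R(t+1) = (γ/2) Σ_i ‖x_i^{t+1} − Σ_j P_{ij} x_j^{t+1}‖_2² + Σ_i B_φ(x_i^{t+1}, y_i^t) + Σ_i (δ_i/ρ) B_{φ_i}(x_i^{t+1}, x_i^t), one has Σ_{t=0}^{T−1} R(t+1) ≤ V(0) for every T, and consequently R(t+1) → 0 as t → ∞. -/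
open scoped RealInnerProductSpace BigOperators
open Filter

private lemma breg_three {n : ℕ} (φ : EuclideanSpace ℝ (Fin n) → ℝ) (u a b : EuclideanSpace ℝ (Fin n)) :
    ⟪gradient φ a - gradient φ b, u - a⟫ = breg φ u b - breg φ u a - breg φ a b := by
  simp only [breg, inner_sub_left, inner_sub_right]; ring

private lemma grad_ineq {n : ℕ} {φ : EuclideanSpace ℝ (Fin n) → ℝ}
    (hd : Differentiable ℝ φ) (hc : ConvexOn ℝ Set.univ φ)
    (u v : EuclideanSpace ℝ (Fin n)) :
    φ v + ⟪gradient φ v, u - v⟫ ≤ φ u := by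
  have hL : HasDerivAt (fun t : ℝ => v + t • (u - v)) (u - v) 0 := by
    simpa using ((hasDerivAt_id (0:ℝ)).smul_const (u - v)).const_add v
  have hgrad : HasFDerivAt φ
      (InnerProductSpace.toDual ℝ (EuclideanSpace ℝ (Fin n)) (gradient φ v))
      (v + (0:ℝ) • (u - v)) := by
    have := (hd (v + (0:ℝ) • (u - v))).hasGradientAt
    rw [hasGradientAt_iff_hasFDerivAt] at this
    simpa using this
  have hψ : HasDerivAt (fun t : ℝ => φ (v + t • (u - v))) ⟪gradient φ v, u - v⟫ 0 := by
    have h := hgrad.comp_hasDerivAt 0 hL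
    rw [InnerProductSpace.toDual_apply_apply] at h
    exact h
  have heq : (fun t : ℝ => φ (v + t • (u - v))) = φ ∘ (AffineMap.lineMap v u) := by
    funext t
    simp only [Function.comp_apply, AffineMap.lineMap_apply_module]
    congr 1
    module
  have hconv : ConvexOn ℝ Set.univ (fun t : ℝ => φ (v + t • (u - v))) := by
    rw [heq]
    have := hc.comp_affineMap (AffineMap.lineMap v u : ℝ →ᵃ[ℝ] EuclideanSpace ℝ (Fin n))
    simpa using this
  have := hconv.le_slope_of_hasDerivAt (Set.mem_univ (0:ℝ)) (Set.mem_univ (1:ℝ)) one_pos hψ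
  rw [slope_def_field] at this
  have e1 : v + (1:ℝ) • (u - v) = u := by module
  have e0 : v + (0:ℝ) • (u - v) = v := by module
  simp only [e1, e0, sub_zero, div_one] at this
  linarith [this]

private lemma sum_rpow_le' {ι : Type*} (s : Finset ι) (b : ι → ℝ) (hb : ∀ k, 0 ≤ b k) {q : ℝ}
    (hq : 1 ≤ q) : ∑ k ∈ s, b k ^ q ≤ (∑ k ∈ s, b k) ^ q := by
  set S := ∑ k ∈ s, b k with hS
  have hS0 : 0 ≤ S := Finset.sum_nonneg fun k _ => hb k
  rcases eq_or_lt_of_le hS0 with h0 | hpos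
  · have : ∀ k ∈ s, b k = 0 := by
      intro k hk
      have := Finset.sum_eq_zero_iff_of_nonneg (fun k _ => hb k) |>.1 h0.symm
      exact this k hk
    have hq0 : q ≠ 0 := by linarith
    rw [Finset.sum_congr rfl (fun k hk => by rw [this k hk])]
    simp [Real.zero_rpow hq0, ← h0]
  · have key : ∀ k ∈ s, b k ^ q ≤ b k * S ^ (q - 1) := by
      intro k hk
      rcases eq_or_lt_of_le (hb k) with hbk | hbk
      · rw [← hbk, Real.zero_rpow (by linarith)]; positivity
      · have hbS : b k ≤ S := Finset.single_le_sum (fun k _ => hb k) hk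
        have h1 : b k ^ q = b k * b k ^ (q - 1) := by
          rw [← Real.rpow_one_add' (le_of_lt hbk) (by intro h; linarith)]
          ring_nf
        rw [h1]
        exact mul_le_mul_of_nonneg_left
          (Real.rpow_le_rpow (le_of_lt hbk) hbS (by linarith)) (hb k)
    calc ∑ k ∈ s, b k ^ q ≤ ∑ k ∈ s, b k * S ^ (q - 1) := Finset.sum_le_sum key
      _ = S * S ^ (q - 1) := by rw [← Finset.sum_mul]
      _ = S ^ q := by
          rw [← Real.rpow_one_add' (le_of_lt hpos) (by intro h; linarith)]
          ring_nf

private lemma lp_sigma {n : ℕ} {p σ : ℝ} (hp : 1 ≤ p)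
    (hσ : σ = min 1 ((n : ℝ) ^ (2 / p - 1))) (w : EuclideanSpace ℝ (Fin n)) :
    σ * ‖w‖ ^ 2 ≤ lpnorm p w ^ 2 := by
  have hp0 : 0 < p := by linarith
  have hσ0 : 0 ≤ σ := by
    rw [hσ]; exact le_min zero_le_one (Real.rpow_nonneg (Nat.cast_nonneg n) _)
  have hSp0 : (0:ℝ) ≤ ∑ k, |w k| ^ p :=
    Finset.sum_nonneg fun k _ => Real.rpow_nonneg (abs_nonneg _) _
  have hlp : lpnorm p w ^ 2 = (∑ k, |w k| ^ p) ^ (2 / p) := by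
    rw [lpnorm, ← Real.rpow_natCast ((∑ k, |w k| ^ p) ^ (1/p)) 2, ← Real.rpow_mul hSp0]
    congr 1
    push_cast
    ring
  have hw2 : ‖w‖ ^ 2 = ∑ k, |w k| ^ (2:ℕ) := by
    rw [EuclideanSpace.norm_eq, Real.sq_sqrt (by positivity)]
    simp [Real.norm_eq_abs]
  rcases Nat.eq_zero_or_pos n with hn | hn
  · subst hn
    have : ‖w‖ ^ 2 = 0 := by rw [hw2]; simp
    rw [this, mul_zero, hlp]
    positivity
  · have hc : (0:ℝ) < (n:ℝ) := by exact_mod_cast hn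
    rcases le_total p 2 with hp2 | hp2
    · -- p ≤ 2 : use σ ≤ 1 and ℓp ≥ ℓ2
      have h1 : ‖w‖ ^ 2 ≤ (∑ k, |w k| ^ p) ^ (2 / p) := by
        have key := sum_rpow_le' Finset.univ (fun k => |w k| ^ p)
          (fun k => Real.rpow_nonneg (abs_nonneg _) _)
          (q := 2 / p) ((one_le_div hp0).2 hp2)
        have heq : ∀ k : Fin n, (|w k| ^ p) ^ (2 / p) = |w k| ^ (2:ℕ) := by
          intro k
          rw [← Real.rpow_natCast (|w k|) 2, ← Real.rpow_mul (abs_nonneg _)]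
          congr 1
          field_simp
          norm_num
        rw [hw2]
        calc ∑ k, |w k| ^ (2:ℕ) = ∑ k, (|w k| ^ p) ^ (2 / p) := by
              exact Finset.sum_congr rfl fun k _ => (heq k).symm
          _ ≤ (∑ k, |w k| ^ p) ^ (2 / p) := key
      calc σ * ‖w‖ ^ 2 ≤ 1 * ‖w‖ ^ 2 := by
            exact mul_le_mul_of_nonneg_right (hσ ▸ min_le_left _ _) (sq_nonneg _)
        _ = ‖w‖ ^ 2 := one_mul _
        _ ≤ (∑ k, |w k| ^ p) ^ (2 / p) := h1
        _ = lpnorm p w ^ 2 := hlp.symm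
    · -- p ≥ 2 : power mean inequality
      have hq1 : 1 ≤ p / 2 := by linarith
      have hpm := Real.rpow_arith_mean_le_arith_mean_rpow Finset.univ
        (fun _ : Fin n => 1 / (n:ℝ)) (fun k => |w k| ^ (2:ℕ))
        (fun _ _ => by positivity) (by
          rw [Finset.sum_const, Finset.card_univ, Fintype.card_fin, nsmul_eq_mul]
          field_simp)
        (fun k _ => by positivity) hq1
      have hz : ∀ k : Fin n, (|w k| ^ (2:ℕ)) ^ (p / 2) = |w k| ^ p := by
        intro k
        rw [← Real.rpow_natCast (|w k|) 2, ← Real.rpow_mul (abs_nonneg _)]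
        congr 1
        field_simp
        norm_num
      rw [← Finset.mul_sum, ← Finset.mul_sum] at hpm
      simp only [hz] at hpm
      have hL0 : (0:ℝ) ≤ 1 / (n:ℝ) * ∑ k, |w k| ^ (2:ℕ) := by positivity
      have h2 := Real.rpow_le_rpow (by positivity) hpm (by positivity : (0:ℝ) ≤ 2 / p)
      rw [← Real.rpow_mul hL0] at h2
      have : p / 2 * (2 / p) = 1 := by field_simp
      rw [this, Real.rpow_one, Real.mul_rpow (by positivity) hSp0] at h2
      -- h2 : 1/n * Σ|w|² ≤ (1/n)^(2/p) * Sp^(2/p)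
      have hσn : σ ≤ (n:ℝ) ^ (2 / p - 1) := hσ ▸ min_le_right _ _
      have hS20 : (0:ℝ) ≤ ∑ k, |w k| ^ (2:ℕ) := by positivity
      have hnt : (n:ℝ) ^ (2 / p) * (1 / (n:ℝ)) ^ (2 / p) = 1 := by
        rw [← Real.mul_rpow hc.le (by positivity)]
        rw [mul_one_div, div_self (ne_of_gt hc), Real.one_rpow]
      have hpow : (n:ℝ) ^ (2 / p - 1) = (n:ℝ) ^ (2 / p) * (1 / (n:ℝ)) := by
        rw [Real.rpow_sub hc, Real.rpow_one]
        ring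
      have h3 : (n:ℝ) ^ (2 / p - 1) * ∑ k, |w k| ^ (2:ℕ)
          ≤ (∑ k, |w k| ^ p) ^ (2 / p) := by
        calc (n:ℝ) ^ (2 / p - 1) * ∑ k, |w k| ^ (2:ℕ)
              = (n:ℝ) ^ (2 / p) * (1 / (n:ℝ) * ∑ k, |w k| ^ (2:ℕ)) := by rw [hpow]; ring
          _ ≤ (n:ℝ) ^ (2 / p) * ((1 / (n:ℝ)) ^ (2 / p) * (∑ k, |w k| ^ p) ^ (2 / p)) :=
              mul_le_mul_of_nonneg_left h2 (by positivity)
          _ = ((n:ℝ) ^ (2 / p) * (1 / (n:ℝ)) ^ (2 / p)) * (∑ k, |w k| ^ p) ^ (2 / p) := by ring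
          _ = (∑ k, |w k| ^ p) ^ (2 / p) := by rw [hnt, one_mul]
      calc σ * ‖w‖ ^ 2 ≤ (n:ℝ) ^ (2 / p - 1) * ‖w‖ ^ 2 :=
            mul_le_mul_of_nonneg_right hσn (sq_nonneg _)
        _ = (n:ℝ) ^ (2 / p - 1) * ∑ k, |w k| ^ (2:ℕ) := by rw [hw2]
        _ ≤ (∑ k, |w k| ^ p) ^ (2 / p) := h3
        _ = lpnorm p w ^ 2 := hlp.symm

private lemma P_contract {m : ℕ} (P : Matrix (Fin m) (Fin m) ℝ) (hPsym : P.IsSymm)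
    (hPnn : ∀ i j, 0 ≤ P i j) (hProw : ∀ i, ∑ j, P i j = 1) (hPpsd : P.PosSemidef)
    (v : Fin m → ℝ) :
    ∑ i, (∑ j, P i j * v j) * (∑ j, P i j * v j) ≤ ∑ i, v i * ∑ j, P i j * v j := by
  have hsym : ∀ i j, P i j = P j i := fun i j => hPsym.apply j i
  have hcol : ∀ j, ∑ i, P i j = 1 := by
    intro j
    rw [Finset.sum_congr rfl fun i _ => hsym i j]
    exact hProw j
  -- quadratic form nonnegativity
  have hquad : ∀ u : Fin m → ℝ, 0 ≤ ∑ i, u i * ∑ j, P i j * u j := by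
    intro u
    have := hPpsd.dotProduct_mulVec_nonneg u
    simpa [dotProduct, Matrix.mulVec] using this
  -- I - P is PSD (diagonally dominant / Laplacian argument)
  have hIP : ∀ u : Fin m → ℝ, ∑ i, u i * ∑ j, P i j * u j ≤ ∑ i, u i * u i := by
    intro u
    have hnn : 0 ≤ ∑ i, ∑ j, P i j * (u i - u j) ^ 2 :=
      Finset.sum_nonneg fun i _ => Finset.sum_nonneg fun j _ =>
        mul_nonneg (hPnn i j) (sq_nonneg _)
    have hsplit : ∑ i, ∑ j, P i j * (u i - u j) ^ 2 =
        (∑ i, ∑ j, P i j * (u i * u i)) - 2 * (∑ i, ∑ j, P i j * u i * u j)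
          + ∑ i, ∑ j, P i j * (u j * u j) := by
      rw [Finset.mul_sum, ← Finset.sum_sub_distrib, ← Finset.sum_add_distrib]
      refine Finset.sum_congr rfl fun i _ => ?_
      rw [Finset.mul_sum, ← Finset.sum_sub_distrib, ← Finset.sum_add_distrib]
      refine Finset.sum_congr rfl fun j _ => by ring
    have e1 : ∑ i, ∑ j, P i j * (u i * u i) = ∑ i, u i * u i := by
      refine Finset.sum_congr rfl fun i _ => ?_
      rw [← Finset.sum_mul, hProw, one_mul]
    have e2 : ∑ i, ∑ j, P i j * (u j * u j) = ∑ i, u i * u i := by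
      rw [Finset.sum_comm]
      refine Finset.sum_congr rfl fun j _ => ?_
      rw [← Finset.sum_mul, hcol, one_mul]
    have e3 : ∑ i, u i * ∑ j, P i j * u j = ∑ i, ∑ j, P i j * u i * u j := by
      refine Finset.sum_congr rfl fun i _ => ?_
      rw [Finset.mul_sum]
      exact Finset.sum_congr rfl fun j _ => by ring
    rw [hsplit, e1, e2] at hnn
    rw [e3]
    linarith
  -- bilinear symmetry swap
  have hswap : ∀ f g : Fin m → ℝ, ∑ i, ∑ j, P i j * f i * g j = ∑ i, ∑ j, P i j * g i * f j := by
    intro f g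
    rw [Finset.sum_comm]
    refine Finset.sum_congr rfl fun j _ => Finset.sum_congr rfl fun i _ => ?_
    rw [hsym i j]; ring
  set Pv : Fin m → ℝ := fun i => ∑ j, P i j * v j with hPv
  set a : ℝ := ∑ i, v i * ∑ j, P i j * v j with hadef
  set b : ℝ := ∑ i, Pv i * Pv i with hbdef
  set c : ℝ := ∑ i, Pv i * ∑ j, P i j * Pv j with hcdef
  have ha : 0 ≤ a := hquad v
  have hc0 : 0 ≤ c := hquad Pv
  have hb0 : 0 ≤ b := Finset.sum_nonneg fun i _ => mul_self_nonneg _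
  have hcb : c ≤ b := hIP Pv
  -- cross term : ∑ v i * (P Pv) i = b
  have hcross : ∑ i, v i * ∑ j, P i j * Pv j = b := by
    have h1 : ∑ i, v i * ∑ j, P i j * Pv j = ∑ i, ∑ j, P i j * v i * Pv j := by
      refine Finset.sum_congr rfl fun i _ => ?_
      rw [Finset.mul_sum]
      exact Finset.sum_congr rfl fun j _ => by ring
    rw [h1, hswap v Pv, hbdef]
    refine Finset.sum_congr rfl fun i _ => ?_
    calc ∑ j, P i j * Pv i * v j = Pv i * ∑ j, P i j * v j := by
          rw [Finset.mul_sum]; exact Finset.sum_congr rfl fun j _ => by ring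
      _ = Pv i * Pv i := rfl
  have hpoly : ∀ t : ℝ, 0 ≤ c * (t * t) + (2 * b) * t + a := by
    intro t
    have hq := hquad (fun i => v i + t * Pv i)
    have hin : ∀ i, ∑ j, P i j * (v j + t * Pv j) = Pv i + t * ∑ j, P i j * Pv j := by
      intro i
      rw [Finset.mul_sum, ← Finset.sum_add_distrib]
      exact Finset.sum_congr rfl fun j _ => by ring
    have hexp : ∑ i, (v i + t * Pv i) * ∑ j, P i j * (v j + t * Pv j)
        = a + t * (∑ i, v i * ∑ j, P i j * Pv j) + t * b + (t * t) * c := by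
      rw [Finset.sum_congr rfl fun i _ => by rw [hin i]]
      have hterm : ∀ i, (v i + t * Pv i) * (Pv i + t * ∑ j, P i j * Pv j)
          = v i * Pv i + t * (v i * ∑ j, P i j * Pv j) + t * (Pv i * Pv i)
            + (t * t) * (Pv i * ∑ j, P i j * Pv j) := fun i => by ring
      rw [Finset.sum_congr rfl fun i _ => hterm i]
      rw [Finset.sum_add_distrib, Finset.sum_add_distrib, Finset.sum_add_distrib,
        ← Finset.mul_sum, ← Finset.mul_sum, ← Finset.mul_sum]
    rw [hexp, hcross] at hq
    linarith
  have hdis := discrim_le_zero hpoly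
  rw [discrim] at hdis
  have hb2 : b * b ≤ a * b := by nlinarith
  show b ≤ a
  rcases eq_or_lt_of_le hb0 with hbz | hbp
  · rw [← hbz]; exact ha
  · exact le_of_mul_le_mul_right (by linarith) hbp

private lemma block_contract {n m : ℕ} (P : Matrix (Fin m) (Fin m) ℝ) (hPsym : P.IsSymm)
    (hPnn : ∀ i j, 0 ≤ P i j) (hProw : ∀ i, ∑ j, P i j = 1) (hPpsd : P.PosSemidef)
    (X : Fin m → EuclideanSpace ℝ (Fin n)) :
    ∑ i, ⟪(∑ j, P i j • X j), (∑ j, P i j • X j)⟫ ≤ ∑ i, ⟪X i, ∑ j, P i j • X j⟫ := by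
  have hcoord : ∀ (i : Fin m) (k : Fin n), (∑ j, P i j • X j) k = ∑ j, P i j * X j k := by
    intro i k
    calc (∑ j, P i j • X j) k
        = EuclideanSpace.proj k (∑ j, P i j • X j) := rfl
      _ = ∑ j, P i j * X j k := by
          simpa using map_sum (EuclideanSpace.proj k : EuclideanSpace ℝ (Fin n) →L[ℝ] ℝ)
            (fun j => P i j • X j) Finset.univ
  have hinner : ∀ (u v : EuclideanSpace ℝ (Fin n)), ⟪u, v⟫ = ∑ k, u k * v k := by
    intro u v
    simp [PiLp.inner_apply, RCLike.inner_apply]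
    exact Finset.sum_congr rfl fun k _ => mul_comm _ _
  calc ∑ i, ⟪(∑ j, P i j • X j), (∑ j, P i j • X j)⟫
      = ∑ i, ∑ k, (∑ j, P i j * X j k) * (∑ j, P i j * X j k) := by
        refine Finset.sum_congr rfl fun i _ => ?_
        rw [hinner]
        exact Finset.sum_congr rfl fun k _ => by rw [hcoord]
    _ = ∑ k, ∑ i, (∑ j, P i j * X j k) * (∑ j, P i j * X j k) := Finset.sum_comm
    _ ≤ ∑ k, ∑ i, X i k * ∑ j, P i j * X j k := by
        refine Finset.sum_le_sum fun k _ => ?_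
        exact P_contract P hPsym hPnn hProw hPpsd (fun j => X j k)
    _ = ∑ i, ∑ k, X i k * ∑ j, P i j * X j k := Finset.sum_comm
    _ = ∑ i, ⟪X i, ∑ j, P i j • X j⟫ := by
        refine Finset.sum_congr rfl fun i _ => ?_
        rw [hinner]
        exact Finset.sum_congr rfl fun k _ => by rw [hcoord]

set_option maxHeartbeats 2000000 in
/-- Global convergence of Bregman PDMM: the residuals are summable against the
initial Lyapunov value, and hence converge to zero. -/
theorem bregman_pdmm_global_convergence {n m : ℕ}
    (𝒳 : Set (EuclideanSpace ℝ (Fin n)))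
    (hXne : 𝒳.Nonempty) (hXclosed : IsClosed 𝒳) (hXconv : Convex ℝ 𝒳)
    (f : Fin m → EuclideanSpace ℝ (Fin n) → ℝ)
    (hf : ∀ i, ConvexOn ℝ Set.univ (f i))
    (P : Matrix (Fin m) (Fin m) ℝ) (hPsym : P.IsSymm)
    (hPnn : ∀ i j, 0 ≤ P i j) (hProw : ∀ i, ∑ j, P i j = 1) (hPpsd : P.PosSemidef)
    (φ : EuclideanSpace ℝ (Fin n) → ℝ)
    (hφd : Differentiable ℝ φ) (hφc : ConvexOn ℝ Set.univ φ)
    (φi : Fin m → EuclideanSpace ℝ (Fin n) → ℝ)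
    (hφid : ∀ i, Differentiable ℝ (φi i)) (hφic : ∀ i, ConvexOn ℝ Set.univ (φi i))
    (μ p σ ρ τ γ : ℝ) (δ : Fin m → ℝ)
    (hμ : 0 < μ) (hp : 1 ≤ p)
    (hstrong : ∀ u ∈ 𝒳, ∀ v ∈ 𝒳, μ / 2 * lpnorm p (u - v) ^ 2 ≤ breg φ u v)
    (hσ : σ = min 1 ((n : ℝ) ^ (2 / p - 1)))
    (hρ : 0 < ρ) (hτ : 0 < τ) (hδ : ∀ i, 0 ≤ δ i)
    (hγ0 : 0 < γ) (hγ : γ < μ * σ) (hτρ : τ ≤ ρ * (μ * σ - γ))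
    (x y ν : ℕ → Fin m → EuclideanSpace ℝ (Fin n))
    (hxX : ∀ t i, x t i ∈ 𝒳) (hyX : ∀ t i, y t i ∈ 𝒳)
    (hmirror : ∀ t : ℕ, ∀ i, ∀ u ∈ 𝒳,
      0 ≤ ∑ j, P i j * ⟪gradient φ (y t i) - gradient φ (x t j), u - y t i⟫)
    (hprimal : ∀ t : ℕ, ∀ i, ∃ g : EuclideanSpace ℝ (Fin n),
      (∀ v ∈ 𝒳, 0 ≤ ⟪g, x (t + 1) i - v⟫) ∧
      ∀ v, f i v ≥ f i (x (t + 1) i) +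
        ⟪-ν t i + (∑ j, P i j • ν t j)
            - ρ • (gradient φ (x (t + 1) i) - gradient φ (y t i))
            - δ i • (gradient (φi i) (x (t + 1) i) - gradient (φi i) (x t i))
            - g, v - x (t + 1) i⟫)
    (hdual : ∀ t : ℕ, ∀ i, ν (t + 1) i =
      ν t i + τ • (x (t + 1) i - ∑ j, P i j • x (t + 1) j))
    (xstar : EuclideanSpace ℝ (Fin n)) (hxstar : xstar ∈ 𝒳)
    (νstar : Fin m → EuclideanSpace ℝ (Fin n))
    (hkkt : ∀ i, ∃ g : EuclideanSpace ℝ (Fin n),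
      (∀ v ∈ 𝒳, 0 ≤ ⟪g, xstar - v⟫) ∧
      ∀ v, f i v ≥ f i xstar +
        ⟪-νstar i + (∑ j, P i j • νstar j) - g, v - xstar⟫)
    (V : ℕ → ℝ)
    (hV : ∀ s, V s =
      1 / (2 * τ * ρ) * ∑ i, ‖νstar i - ν s i‖ ^ 2
        + (∑ i, breg φ xstar (y s i))
        + ∑ i, δ i / ρ * breg (φi i) xstar (x s i))
    (R : ℕ → ℝ)
    (hR : ∀ t : ℕ, R (t + 1) =
      γ / 2 * ∑ i, ‖x (t + 1) i - ∑ j, P i j • x (t + 1) j‖ ^ 2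
        + (∑ i, breg φ (x (t + 1) i) (y t i))
        + ∑ i, δ i / ρ * breg (φi i) (x (t + 1) i) (x t i)) :
    (∀ T : ℕ, ∑ t ∈ Finset.range T, R (t + 1) ≤ V 0) ∧
      Tendsto (fun t : ℕ => R (t + 1)) atTop (nhds 0) := by
  -- basic positivity facts
  have hρ0 : (ρ:ℝ) ≠ 0 := ne_of_gt hρ
  have hτ0 : (τ:ℝ) ≠ 0 := ne_of_gt hτ
  have hσ0 : 0 ≤ σ := by
    rw [hσ]; exact le_min zero_le_one (Real.rpow_nonneg (Nat.cast_nonneg n) _)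
  have hbregφ_nonneg : ∀ u ∈ 𝒳, ∀ v ∈ 𝒳, 0 ≤ breg φ u v := by
    intro u hu v hv
    have h1 := hstrong u hu v hv
    have h2 : 0 ≤ μ / 2 * lpnorm p (u - v) ^ 2 :=
      mul_nonneg (by linarith) (sq_nonneg _)
    linarith
  have hbregφi_nonneg : ∀ i (u v : EuclideanSpace ℝ (Fin n)), 0 ≤ breg (φi i) u v := by
    intro i u v
    have := grad_ineq (hφid i) (hφic i) u v
    simp only [breg]
    linarith
  have hbregφ_sq : ∀ u ∈ 𝒳, ∀ v ∈ 𝒳, μ * σ / 2 * ‖u - v‖ ^ 2 ≤ breg φ u v := by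
    intro u hu v hv
    have h1 := hstrong u hu v hv
    have h2 := lp_sigma hp hσ (u - v)
    nlinarith [sq_nonneg (lpnorm p (u - v))]
  have hVnonneg : ∀ s, 0 ≤ V s := by
    intro s
    rw [hV s]
    have h1 : 0 ≤ 1 / (2 * τ * ρ) * ∑ i, ‖νstar i - ν s i‖ ^ 2 := by positivity
    have h2 : 0 ≤ ∑ i, breg φ xstar (y s i) :=
      Finset.sum_nonneg fun i _ => hbregφ_nonneg _ hxstar _ (hyX s i)
    have h3 : 0 ≤ ∑ i, δ i / ρ * breg (φi i) xstar (x s i) :=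
      Finset.sum_nonneg fun i _ =>
        mul_nonneg (div_nonneg (hδ i) hρ.le) (hbregφi_nonneg i _ _)
    linarith
  have hRnonneg : ∀ t : ℕ, 0 ≤ R (t + 1) := by
    intro t
    rw [hR t]
    have h1 : 0 ≤ γ / 2 * ∑ i, ‖x (t + 1) i - ∑ j, P i j • x (t + 1) j‖ ^ 2 := by positivity
    have h2 : 0 ≤ ∑ i, breg φ (x (t + 1) i) (y t i) :=
      Finset.sum_nonneg fun i _ => hbregφ_nonneg _ (hxX (t + 1) i) _ (hyX t i)
    have h3 : 0 ≤ ∑ i, δ i / ρ * breg (φi i) (x (t + 1) i) (x t i) :=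
      Finset.sum_nonneg fun i _ =>
        mul_nonneg (div_nonneg (hδ i) hρ.le) (hbregφi_nonneg i _ _)
    linarith
  have hdescent : ∀ t : ℕ, R (t + 1) + V (t + 1) ≤ V t := by
    intro t
    have hsym : ∀ i j, P i j = P j i := fun i j => hPsym.apply j i
    have hcol : ∀ j, ∑ i, P i j = 1 := by
      intro j
      rw [Finset.sum_congr rfl fun i _ => hsym i j]
      exact hProw j
    -- Step A : per-node optimality combination
    have hAi : ∀ i,
        ρ * ⟪gradient φ (x (t+1) i) - gradient φ (y t i), x (t+1) i - xstar⟫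
        + δ i * ⟪gradient (φi i) (x (t+1) i) - gradient (φi i) (x t i), x (t+1) i - xstar⟫
        ≤ ⟪(∑ j, P i j • (ν t j - νstar j)) - (ν t i - νstar i), x (t+1) i - xstar⟫ := by
      intro i
      obtain ⟨g, hg, hfg⟩ := hprimal t i
      obtain ⟨gs, hgs, hfgs⟩ := hkkt i
      have h1 := hfg xstar
      have h2 := hfgs (x (t+1) i)
      have hgX := hg xstar hxstar
      have hgsX := hgs (x (t+1) i) (hxX (t+1) i)
      simp only [ge_iff_le, inner_sub_left, inner_add_left, inner_neg_left,
        real_inner_smul_left, sum_inner, inner_sub_right, smul_sub,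
        Finset.sum_sub_distrib, mul_sub] at h1 h2 hgX hgsX ⊢
      linarith [h1, h2, hgX, hgsX]
    -- rewrite step A via Bregman three-point identities
    have hIi : ∀ i,
        ρ * (breg φ xstar (x (t+1) i) + breg φ (x (t+1) i) (y t i) - breg φ xstar (y t i))
        + δ i * (breg (φi i) xstar (x (t+1) i) + breg (φi i) (x (t+1) i) (x t i)
            - breg (φi i) xstar (x t i))
        ≤ ⟪(∑ j, P i j • (ν t j - νstar j)) - (ν t i - νstar i), x (t+1) i - xstar⟫ := by
      intro i
      have hb1 := breg_three φ xstar (x (t+1) i) (y t i)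
      have hb2 := breg_three (φi i) xstar (x (t+1) i) (x t i)
      have e1 : ⟪gradient φ (x (t+1) i) - gradient φ (y t i), xstar - x (t+1) i⟫
          = -⟪gradient φ (x (t+1) i) - gradient φ (y t i), x (t+1) i - xstar⟫ := by
        rw [← inner_neg_right, neg_sub]
      have e2 : ⟪gradient (φi i) (x (t+1) i) - gradient (φi i) (x t i), xstar - x (t+1) i⟫
          = -⟪gradient (φi i) (x (t+1) i) - gradient (φi i) (x t i), x (t+1) i - xstar⟫ := by
        rw [← inner_neg_right, neg_sub]
      rw [e1] at hb1
      rw [e2] at hb2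
      have hq1 : ⟪gradient φ (x (t+1) i) - gradient φ (y t i), x (t+1) i - xstar⟫
          = breg φ xstar (x (t+1) i) + breg φ (x (t+1) i) (y t i) - breg φ xstar (y t i) := by
        linarith [hb1]
      have hq2 : ⟪gradient (φi i) (x (t+1) i) - gradient (φi i) (x t i), x (t+1) i - xstar⟫
          = breg (φi i) xstar (x (t+1) i) + breg (φi i) (x (t+1) i) (x t i)
            - breg (φi i) xstar (x t i) := by
        linarith [hb2]
      have hA := hAi i
      rw [hq1, hq2] at hA
      exact hA
    -- Step (I) : summed version
    have hI : ρ * (((∑ i, breg φ xstar (x (t+1) i)) + (∑ i, breg φ (x (t+1) i) (y t i))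
            - ∑ i, breg φ xstar (y t i))
          + ((∑ i, δ i / ρ * breg (φi i) xstar (x (t+1) i))
            + (∑ i, δ i / ρ * breg (φi i) (x (t+1) i) (x t i))
            - ∑ i, δ i / ρ * breg (φi i) xstar (x t i)))
        ≤ ∑ i, ⟪(∑ j, P i j • (ν t j - νstar j)) - (ν t i - νstar i), x (t+1) i - xstar⟫ := by
      have hsum := Finset.sum_le_sum (fun i (_ : i ∈ Finset.univ) => hIi i)
      have hL : ∑ i, (ρ * (breg φ xstar (x (t+1) i) + breg φ (x (t+1) i) (y t i)
              - breg φ xstar (y t i))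
            + δ i * (breg (φi i) xstar (x (t+1) i) + breg (φi i) (x (t+1) i) (x t i)
              - breg (φi i) xstar (x t i)))
          = ρ * (((∑ i, breg φ xstar (x (t+1) i)) + (∑ i, breg φ (x (t+1) i) (y t i))
              - ∑ i, breg φ xstar (y t i))
            + ((∑ i, δ i / ρ * breg (φi i) xstar (x (t+1) i))
              + (∑ i, δ i / ρ * breg (φi i) (x (t+1) i) (x t i))
              - ∑ i, δ i / ρ * breg (φi i) xstar (x t i))) := by
        have hper : ∀ i, ρ * (breg φ xstar (x (t+1) i) + breg φ (x (t+1) i) (y t i)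
              - breg φ xstar (y t i))
            + δ i * (breg (φi i) xstar (x (t+1) i) + breg (φi i) (x (t+1) i) (x t i)
              - breg (φi i) xstar (x t i))
            = ρ * (breg φ xstar (x (t+1) i) + breg φ (x (t+1) i) (y t i)
              - breg φ xstar (y t i)
              + (δ i / ρ * breg (φi i) xstar (x (t+1) i)
                + δ i / ρ * breg (φi i) (x (t+1) i) (x t i)
                - δ i / ρ * breg (φi i) xstar (x t i))) := by
          intro i
          have hρδ : ρ * (δ i / ρ) = δ i := by field_simp
          linear_combination (breg (φi i) xstar (x (t+1) i) + breg (φi i) (x (t+1) i) (x t i)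
            - breg (φi i) xstar (x t i)) * hρδ.symm
          all_goals simp
        rw [Finset.sum_congr rfl fun i _ => hper i, ← Finset.mul_sum]
        congr 1
        simp only [Finset.sum_add_distrib, Finset.sum_sub_distrib]
        all_goals simp
      rw [hL] at hsum
      exact hsum
    -- Step (II) : dual update identity
    have hIIa : ∑ i, ⟪(∑ j, P i j • (ν t j - νstar j)) - (ν t i - νstar i), x (t+1) i - xstar⟫
        = ∑ i, -⟪ν t i - νstar i, x (t+1) i - ∑ j, P i j • x (t+1) j⟫ := by
      have swap : ∑ i, ∑ j, P i j * ⟪ν t j - νstar j, x (t+1) i⟫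
          = ∑ i, ∑ j, P i j * ⟪ν t i - νstar i, x (t+1) j⟫ := by
        rw [Finset.sum_comm]
        exact Finset.sum_congr rfl fun j _ => Finset.sum_congr rfl fun i _ => by rw [hsym i j]
      have colstar : ∑ i, ∑ j, P i j * ⟪ν t j - νstar j, xstar⟫
          = ∑ i, ⟪ν t i - νstar i, xstar⟫ := by
        rw [Finset.sum_comm]
        refine Finset.sum_congr rfl fun j _ => ?_
        rw [← Finset.sum_mul, hcol, one_mul]
      have expandL : ∀ i, ⟪(∑ j, P i j • (ν t j - νstar j)) - (ν t i - νstar i),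
            x (t+1) i - xstar⟫
          = ((∑ j, P i j * ⟪ν t j - νstar j, x (t+1) i⟫)
            - ∑ j, P i j * ⟪ν t j - νstar j, xstar⟫)
            - ⟪ν t i - νstar i, x (t+1) i⟫ + ⟪ν t i - νstar i, xstar⟫ := by
        intro i
        simp only [inner_sub_left, inner_sub_right, sum_inner, real_inner_smul_left,
          Finset.sum_sub_distrib, mul_sub]
        ring
      have expandR : ∀ i, -⟪ν t i - νstar i, x (t+1) i - ∑ j, P i j • x (t+1) j⟫
          = -⟪ν t i - νstar i, x (t+1) i⟫ + ∑ j, P i j * ⟪ν t i - νstar i, x (t+1) j⟫ := by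
        intro i
        simp only [inner_sub_right, inner_sum, real_inner_smul_right]
        ring
      rw [Finset.sum_congr rfl fun i _ => expandL i, Finset.sum_congr rfl fun i _ => expandR i]
      simp only [Finset.sum_add_distrib, Finset.sum_sub_distrib]
      rw [swap, colstar]
      simp only [Finset.sum_neg_distrib]
      ring
    have hIIb : ∀ i, -⟪ν t i - νstar i, x (t+1) i - ∑ j, P i j • x (t+1) j⟫
        = 1/(2*τ) * (‖νstar i - ν t i‖^2 - ‖νstar i - ν (t+1) i‖^2)
          + τ/2 * ‖x (t+1) i - ∑ j, P i j • x (t+1) j‖^2 := by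
      intro i
      have hd : νstar i - ν (t+1) i
          = (νstar i - ν t i) - τ • (x (t+1) i - ∑ j, P i j • x (t+1) j) := by
        rw [hdual t i]
        module
      have hnorm : ‖νstar i - ν (t+1) i‖^2
          = ‖νstar i - ν t i‖^2
            - 2*(τ*⟪νstar i - ν t i, x (t+1) i - ∑ j, P i j • x (t+1) j⟫)
            + τ^2*‖x (t+1) i - ∑ j, P i j • x (t+1) j‖^2 := by
        rw [hd, norm_sub_sq_real, real_inner_smul_right, norm_smul]
        simp only [Real.norm_eq_abs]
        rw [mul_pow, sq_abs]
      have hflip : -⟪ν t i - νstar i, x (t+1) i - ∑ j, P i j • x (t+1) j⟫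
          = ⟪νstar i - ν t i, x (t+1) i - ∑ j, P i j • x (t+1) j⟫ := by
        rw [← inner_neg_left, neg_sub]
      rw [hflip]
      set q : ℝ := ⟪νstar i - ν t i, x (t+1) i - ∑ j, P i j • x (t+1) j⟫ with hq
      set A : ℝ := ‖νstar i - ν t i‖^2
      set B : ℝ := ‖νstar i - ν (t+1) i‖^2
      set C : ℝ := ‖x (t+1) i - ∑ j, P i j • x (t+1) j‖^2
      field_simp
      linarith [hnorm]
    have hII : ∑ i, ⟪(∑ j, P i j • (ν t j - νstar j)) - (ν t i - νstar i), x (t+1) i - xstar⟫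
        = 1/(2*τ) * ((∑ i, ‖νstar i - ν t i‖^2) - ∑ i, ‖νstar i - ν (t+1) i‖^2)
          + τ/2 * ∑ i, ‖x (t+1) i - ∑ j, P i j • x (t+1) j‖^2 := by
      rw [hIIa, Finset.sum_congr rfl fun i _ => hIIb i]
      simp only [Finset.sum_add_distrib, ← Finset.mul_sum, Finset.sum_sub_distrib]
    -- Step (III) : mirror averaging step
    have hD1 : ∀ i, breg φ xstar (y (t+1) i)
          + ∑ j, P i j * breg φ (y (t+1) i) (x (t+1) j)
        ≤ ∑ j, P i j * breg φ xstar (x (t+1) j) := by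
      intro i
      have hm := hmirror (t+1) i xstar hxstar
      have hexp : ∀ j : Fin m,
          ⟪gradient φ (y (t+1) i) - gradient φ (x (t+1) j), xstar - y (t+1) i⟫
          = breg φ xstar (x (t+1) j) - breg φ xstar (y (t+1) i)
            - breg φ (y (t+1) i) (x (t+1) j) := by
        intro j
        have := breg_three φ xstar (y (t+1) i) (x (t+1) j)
        linarith [this]
      rw [Finset.sum_congr rfl fun j _ => by rw [hexp j]] at hm
      have hsplit : ∑ j, P i j * (breg φ xstar (x (t+1) j) - breg φ xstar (y (t+1) i)
            - breg φ (y (t+1) i) (x (t+1) j))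
          = (∑ j, P i j * breg φ xstar (x (t+1) j)) - breg φ xstar (y (t+1) i)
            - ∑ j, P i j * breg φ (y (t+1) i) (x (t+1) j) := by
        simp only [mul_sub, Finset.sum_sub_distrib]
        rw [← Finset.sum_mul, hProw, one_mul]
      rw [hsplit] at hm
      linarith
    have hD : (∑ i, breg φ xstar (y (t+1) i))
          + ∑ i, ∑ j, P i j * breg φ (y (t+1) i) (x (t+1) j)
        ≤ ∑ i, breg φ xstar (x (t+1) i) := by
      have hsum := Finset.sum_le_sum (fun i (_ : i ∈ Finset.univ) => hD1 i)
      rw [Finset.sum_add_distrib] at hsum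
      have hcolB : ∑ i, ∑ j, P i j * breg φ xstar (x (t+1) j)
          = ∑ i, breg φ xstar (x (t+1) i) := by
        rw [Finset.sum_comm]
        refine Finset.sum_congr rfl fun j _ => ?_
        rw [← Finset.sum_mul, hcol, one_mul]
      linarith
    -- Step (E) : strong convexity and network contraction
    have hstar : ∑ i, ‖x (t+1) i - ∑ j, P i j • x (t+1) j‖^2
        ≤ ∑ i, ∑ j, P i j * ‖y (t+1) i - x (t+1) j‖^2 := by
      have hxbar : ∀ i, ∑ j, P i j * ⟪y (t+1) i, x (t+1) j⟫
          = ⟪y (t+1) i, ∑ j, P i j • x (t+1) j⟫ := by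
        intro i
        rw [inner_sum]
        exact Finset.sum_congr rfl fun j _ => (real_inner_smul_right _ _ _).symm
      have e1 : ∑ i, ∑ j, P i j * ‖y (t+1) i - x (t+1) j‖^2
          = (∑ i, ‖y (t+1) i‖^2) - 2*(∑ i, ⟪y (t+1) i, ∑ j, P i j • x (t+1) j⟫)
            + ∑ i, ‖x (t+1) i‖^2 := by
        have per : ∀ i, ∑ j, P i j * ‖y (t+1) i - x (t+1) j‖^2
            = ‖y (t+1) i‖^2 - 2*⟪y (t+1) i, ∑ j, P i j • x (t+1) j⟫
              + ∑ j, P i j * ‖x (t+1) j‖^2 := by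
          intro i
          have hterm : ∀ j : Fin m, P i j * ‖y (t+1) i - x (t+1) j‖^2
              = P i j * ‖y (t+1) i‖^2 - 2*(P i j * ⟪y (t+1) i, x (t+1) j⟫)
                + P i j * ‖x (t+1) j‖^2 := by
            intro j
            rw [norm_sub_sq_real]
            ring
          rw [Finset.sum_congr rfl fun j _ => hterm j]
          simp only [Finset.sum_add_distrib, Finset.sum_sub_distrib, ← Finset.mul_sum]
          rw [← Finset.sum_mul, hProw, one_mul, hxbar]
        rw [Finset.sum_congr rfl fun i _ => per i]
        have hcolX : ∑ i, ∑ j, P i j * ‖x (t+1) j‖^2 = ∑ i, ‖x (t+1) i‖^2 := by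
          rw [Finset.sum_comm]
          refine Finset.sum_congr rfl fun j _ => ?_
          rw [← Finset.sum_mul, hcol, one_mul]
        simp only [Finset.sum_add_distrib, Finset.sum_sub_distrib, ← Finset.mul_sum]
        rw [hcolX]
      have e2 : ∑ i, ‖x (t+1) i - ∑ j, P i j • x (t+1) j‖^2
          = (∑ i, ‖x (t+1) i‖^2) - 2*(∑ i, ⟪x (t+1) i, ∑ j, P i j • x (t+1) j⟫)
            + ∑ i, ‖∑ j, P i j • x (t+1) j‖^2 := by
        rw [Finset.sum_congr rfl fun i _ => norm_sub_sq_real (x (t+1) i) (∑ j, P i j • x (t+1) j)]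
        simp only [Finset.sum_add_distrib, Finset.sum_sub_distrib, ← Finset.mul_sum]
      have e3 : ∑ i, ‖y (t+1) i - ∑ j, P i j • x (t+1) j‖^2
          = (∑ i, ‖y (t+1) i‖^2) - 2*(∑ i, ⟪y (t+1) i, ∑ j, P i j • x (t+1) j⟫)
            + ∑ i, ‖∑ j, P i j • x (t+1) j‖^2 := by
        rw [Finset.sum_congr rfl fun i _ => norm_sub_sq_real (y (t+1) i) (∑ j, P i j • x (t+1) j)]
        simp only [Finset.sum_add_distrib, Finset.sum_sub_distrib, ← Finset.mul_sum]
      have hblock := block_contract P hPsym hPnn hProw hPpsd (x (t+1))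
      have hblock' : ∑ i, ‖∑ j, P i j • x (t+1) j‖^2
          ≤ ∑ i, ⟪x (t+1) i, ∑ j, P i j • x (t+1) j⟫ := by
        calc ∑ i, ‖∑ j, P i j • x (t+1) j‖^2
            = ∑ i, ⟪(∑ j, P i j • x (t+1) j), (∑ j, P i j • x (t+1) j)⟫ := by
              exact Finset.sum_congr rfl fun i _ => (real_inner_self_eq_norm_sq _).symm
          _ ≤ _ := hblock
      have hYnn : 0 ≤ ∑ i, ‖y (t+1) i - ∑ j, P i j • x (t+1) j‖^2 :=
        Finset.sum_nonneg fun i _ => sq_nonneg _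
      linarith [e1, e2, e3, hblock', hYnn]
    have hE : μ*σ/2 * ∑ i, ‖x (t+1) i - ∑ j, P i j • x (t+1) j‖^2
        ≤ ∑ i, ∑ j, P i j * breg φ (y (t+1) i) (x (t+1) j) := by
      have hμσ0 : 0 ≤ μ*σ/2 := by positivity
      have step2 : ∑ i, ∑ j, P i j * (μ*σ/2 * ‖y (t+1) i - x (t+1) j‖^2)
          ≤ ∑ i, ∑ j, P i j * breg φ (y (t+1) i) (x (t+1) j) := by
        refine Finset.sum_le_sum fun i _ => Finset.sum_le_sum fun j _ => ?_
        exact mul_le_mul_of_nonneg_left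
          (hbregφ_sq _ (hyX (t+1) i) _ (hxX (t+1) j)) (hPnn i j)
      calc μ*σ/2 * ∑ i, ‖x (t+1) i - ∑ j, P i j • x (t+1) j‖^2
          ≤ μ*σ/2 * ∑ i, ∑ j, P i j * ‖y (t+1) i - x (t+1) j‖^2 :=
            mul_le_mul_of_nonneg_left hstar hμσ0
        _ = ∑ i, ∑ j, P i j * (μ*σ/2 * ‖y (t+1) i - x (t+1) j‖^2) := by
            rw [Finset.mul_sum]
            refine Finset.sum_congr rfl fun i _ => ?_
            rw [Finset.mul_sum]
            exact Finset.sum_congr rfl fun j _ => by ring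
        _ ≤ _ := step2
    have hIII : (∑ i, breg φ xstar (y (t+1) i))
          + μ*σ/2 * ∑ i, ‖x (t+1) i - ∑ j, P i j • x (t+1) j‖^2
        ≤ ∑ i, breg φ xstar (x (t+1) i) := by linarith [hD, hE]
    -- combine everything
    have hcoef : γ/2 + τ/(2*ρ) ≤ μ*σ/2 := by
      have h1 : τ/ρ ≤ μ*σ - γ := (div_le_iff₀ hρ).2 (by linarith [hτρ])
      have h2 : τ/(2*ρ) = (τ/ρ)/2 := by ring
      linarith [h1, h2.le, h2.ge]
    have hRsq0 : 0 ≤ ∑ i, ‖x (t+1) i - ∑ j, P i j • x (t+1) j‖^2 :=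
      Finset.sum_nonneg fun i _ => sq_nonneg _
    have hfin : γ/2 * ∑ i, ‖x (t+1) i - ∑ j, P i j • x (t+1) j‖^2
        ≤ μ*σ/2 * (∑ i, ‖x (t+1) i - ∑ j, P i j • x (t+1) j‖^2)
          - τ/(2*ρ) * ∑ i, ‖x (t+1) i - ∑ j, P i j • x (t+1) j‖^2 := by
      nlinarith [mul_le_mul_of_nonneg_right hcoef hRsq0]
    have h5 := hI.trans_eq hII
    have h6 : (((∑ i, breg φ xstar (x (t+1) i)) + (∑ i, breg φ (x (t+1) i) (y t i))
            - ∑ i, breg φ xstar (y t i))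
          + ((∑ i, δ i / ρ * breg (φi i) xstar (x (t+1) i))
            + (∑ i, δ i / ρ * breg (φi i) (x (t+1) i) (x t i))
            - ∑ i, δ i / ρ * breg (φi i) xstar (x t i)))
        ≤ (1/(2*τ) * ((∑ i, ‖νstar i - ν t i‖^2) - ∑ i, ‖νstar i - ν (t+1) i‖^2)
          + τ/2 * ∑ i, ‖x (t+1) i - ∑ j, P i j • x (t+1) j‖^2) / ρ := by
      rw [le_div_iff₀ hρ, mul_comm]
      exact h5
    have h7 : (1/(2*τ) * ((∑ i, ‖νstar i - ν t i‖^2) - ∑ i, ‖νstar i - ν (t+1) i‖^2)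
          + τ/2 * ∑ i, ‖x (t+1) i - ∑ j, P i j • x (t+1) j‖^2) / ρ
        = 1/(2*τ*ρ) * ∑ i, ‖νstar i - ν t i‖^2
          - 1/(2*τ*ρ) * ∑ i, ‖νstar i - ν (t+1) i‖^2
          + τ/(2*ρ) * ∑ i, ‖x (t+1) i - ∑ j, P i j • x (t+1) j‖^2 := by
      field_simp
    rw [h7] at h6
    rw [hR t, hV t, hV (t+1)]
    linarith [h6, hIII, hfin]
  have hsumT : ∀ T : ℕ, ∑ t ∈ Finset.range T, R (t + 1) ≤ V 0 := by
    have h : ∀ T : ℕ, (∑ t ∈ Finset.range T, R (t + 1)) + V T ≤ V 0 := by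
      intro T
      induction T with
      | zero => simp
      | succ T ih =>
        rw [Finset.sum_range_succ]
        have := hdescent T
        linarith
    intro T
    linarith [h T, hVnonneg T]
  refine ⟨hsumT, ?_⟩
  have hs : Summable (fun t : ℕ => R (t + 1)) :=
    summable_of_sum_range_le (fun t => hRnonneg t) hsumT
  exact hs.tendsto_atTop_zero
end
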